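/- For every f ∈ H, every set A ⊆ 2^ω with A ∈ I_f has topological closure that is nowhere dense and of measure zero with respect to the fair-coin product probability measure on 2^ω. -/

import Mathlib

/-- `level A n` is the number of distinct restrictions to `n` of elements of `A ⊆ 2^ω`. -/
noncomputable def level (A : Set (ℕ → Bool)) (n : ℕ) : ℕ :=
  ((fun x : ℕ → Bool => (fun i : Fin n => x i)) '' A).ncard

/-- The class `H` of non-decreasing, unbounded `f : ℕ → ℕ` with `f n ≤ n`. -/
def memH (f : ℕ → ℕ) : Prop :=
  Monotone f ∧ (∀ m : ℕ, ∃ n, m ≤ f n) ∧ ∀ n, f n ≤ n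

/-- The ideal `I_f` on `2^ω`. -/
def idealI (f : ℕ → ℕ) : Set (Set (ℕ → Bool)) :=
  {A | ∀ d : ℕ, 1 ≤ d → ∀ᶠ n in Filter.atTop, d * level A n ≤ f n}

/-- The basic clopen set `[s]` of branches through the finite binary sequence `s`. -/
def cylinder (s : List Bool) : Set (ℕ → Bool) :=
  {x | ∀ i : Fin s.length, x i = s.get i}

/-- `μ` is the fair-coin product probability measure on `2^ω`: it is a probability
measure giving each basic clopen set `[s]` measure `2^{-|s|}`. -/
def IsFairCoinMeasure (μ : MeasureTheory.Measure (ℕ → Bool)) : Prop :=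
  MeasureTheory.IsProbabilityMeasure μ ∧
  ∀ s : List Bool, μ (cylinder s) = (2 : ENNReal)⁻¹ ^ s.length

open MeasureTheory Filter

lemma cylinder_ofFn (n : ℕ) (v : Fin n → Bool) :
    _root_.cylinder (List.ofFn v) = {x : ℕ → Bool | ∀ i : Fin n, x i = v i} := by
  ext x
  simp only [_root_.cylinder, Set.mem_setOf_eq, Fin.forall_iff, List.length_ofFn]
  constructor
  · intro h i hi
    have := h i hi
    rwa [List.get_ofFn] at this
  · intro h i hi
    rw [List.get_ofFn]
    exact h i (by simpa using hi)

lemma meas_cyl (μ : Measure (ℕ → Bool)) (hμ : IsFairCoinMeasure μ) (n : ℕ) (v : Fin n → Bool) :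
    μ {x : ℕ → Bool | ∀ i : Fin n, x i = v i} = (2 : ENNReal)⁻¹ ^ n := by
  rw [← cylinder_ofFn, hμ.2, List.length_ofFn]

lemma measurable_cyl (n : ℕ) (v : Fin n → Bool) :
    MeasurableSet {x : ℕ → Bool | ∀ i : Fin n, x i = v i} := by
  have : {x : ℕ → Bool | ∀ i : Fin n, x i = v i} =
      ⋂ i : Fin n, (fun x : ℕ → Bool => x i) ⁻¹' {v i} := by
    ext x; simp
  rw [this]
  exact MeasurableSet.iInter fun i => (measurable_pi_apply _) (MeasurableSet.singleton _)

lemma meas_preimage (μ : Measure (ℕ → Bool)) (hμ : IsFairCoinMeasure μ) (n : ℕ)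
    (S : Set (Fin n → Bool)) :
    μ {x : ℕ → Bool | (fun i : Fin n => x i) ∈ S} = S.ncard * (2 : ENNReal)⁻¹ ^ n := by
  classical
  have hfin : S.Finite := Set.toFinite S
  have hU : {x : ℕ → Bool | (fun i : Fin n => x i) ∈ S} =
      ⋃ v ∈ hfin.toFinset, {x : ℕ → Bool | ∀ i : Fin n, x i = v i} := by
    ext x
    simp only [Set.mem_setOf_eq, Set.mem_iUnion, Set.Finite.mem_toFinset]
    constructor
    · intro h
      exact ⟨fun i => x i, h, fun i => rfl⟩
    · rintro ⟨v, hv, h⟩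
      have : (fun i : Fin n => x i) = v := funext fun i => h i
      rwa [this]
  rw [hU, measure_biUnion_finset ?_ (fun v _ => measurable_cyl n v)]
  · rw [Finset.sum_congr rfl (fun v _ => meas_cyl μ hμ n v), Finset.sum_const,
      Set.ncard_eq_toFinset_card S hfin, nsmul_eq_mul]
  · intro v hv w hw hvw
    simp only [Function.onFun, Set.disjoint_left]
    intro x hx hx'
    exact hvw (funext fun i => by rw [← hx i, ← hx' i])


theorem stmt_11 (f : ℕ → ℕ) (hf : memH f) (A : Set (ℕ → Bool)) (hA : A ∈ idealI f)
    (μ : MeasureTheory.Measure (ℕ → Bool)) (hμ : IsFairCoinMeasure μ) :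
    IsNowhereDense (closure A) ∧ μ (closure A) = 0 := by
  -- main bound
  have hbound : ∀ n : ℕ, μ (closure A) ≤ (level A n : ENNReal) * (2 : ENNReal)⁻¹ ^ n := by
    intro n
    set S : Set (Fin n → Bool) := (fun x : ℕ → Bool => (fun i : Fin n => x i)) '' A with hS
    have hcont : Continuous (fun x : ℕ → Bool => (fun i : Fin n => x i)) :=
      continuous_pi fun i => continuous_apply (i : ℕ)
    have hclosed : IsClosed {x : ℕ → Bool | (fun i : Fin n => x i) ∈ S} :=
      (isClosed_discrete S).preimage hcont
    have hsub : closure A ⊆ {x : ℕ → Bool | (fun i : Fin n => x i) ∈ S} := by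
      apply closure_minimal _ hclosed
      intro x hx
      exact ⟨x, hx, rfl⟩
    calc μ (closure A) ≤ μ {x : ℕ → Bool | (fun i : Fin n => x i) ∈ S} := measure_mono hsub
      _ = (level A n : ENNReal) * (2 : ENNReal)⁻¹ ^ n := meas_preimage μ hμ n S
  -- measure zero
  have hmeas : μ (closure A) = 0 := by
    have hev : ∀ᶠ (n : ℕ) in atTop, μ (closure A) ≤ ENNReal.ofReal ((n : ℝ) * (1/2 : ℝ) ^ n) := by
      filter_upwards [hA 1 le_rfl] with n hn
      have hln : level A n ≤ n := le_trans (by simpa using hn) (hf.2.2 n)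
      calc μ (closure A) ≤ (level A n : ENNReal) * (2 : ENNReal)⁻¹ ^ n := hbound n
        _ ≤ (n : ENNReal) * (2 : ENNReal)⁻¹ ^ n := by
            gcongr
        _ = ENNReal.ofReal ((n : ℝ) * (1/2 : ℝ) ^ n) := by
            rw [ENNReal.ofReal_mul (by positivity), ENNReal.ofReal_pow (by norm_num),
              ENNReal.ofReal_natCast]
            congr 1
            rw [ENNReal.ofReal_div_of_pos (by norm_num)]
            norm_num
    have htend : Tendsto (fun n : ℕ => ENNReal.ofReal ((n : ℝ) * (1/2 : ℝ) ^ n)) atTop (nhds 0) := by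
      have := tendsto_self_mul_const_pow_of_lt_one (r := (1/2 : ℝ)) (by norm_num) (by norm_num)
      have := (ENNReal.continuous_ofReal.tendsto 0).comp this
      rw [ENNReal.ofReal_zero] at this
      exact this
    have := ge_of_tendsto htend hev
    simpa using this
  refine ⟨?_, hmeas⟩
  -- nowhere dense
  rw [IsNowhereDense, closure_closure]
  by_contra h
  obtain ⟨x, hx⟩ := Set.nonempty_iff_ne_empty.2 h
  obtain ⟨I, u, hu, hpi⟩ := isOpen_pi_iff.1 isOpen_interior x hx
  set n : ℕ := (I.sup id) + 1 with hn
  have hcyl : {y : ℕ → Bool | ∀ i : Fin n, y i = x i} ⊆ closure A := by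
    intro y hy
    apply interior_subset
    apply hpi
    intro i hi
    have hilt : i < n := Nat.lt_succ_of_le (Finset.le_sup (f := id) hi)
    have := hy ⟨i, hilt⟩
    rw [this]
    exact (hu i hi).2
  have h1 : μ {y : ℕ → Bool | ∀ i : Fin n, y i = x i} = (2 : ENNReal)⁻¹ ^ n :=
    meas_cyl μ hμ n (fun i => x i)
  have h2 : μ {y : ℕ → Bool | ∀ i : Fin n, y i = x i} = 0 :=
    le_antisymm (hmeas ▸ measure_mono hcyl) zero_le
  rw [h1] at h2
  exact pow_ne_zero n (ENNReal.inv_ne_zero.2 ENNReal.ofNat_ne_top) h2
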